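/- For α = (α₁,…,α_r) ∈ (ℤ_{≥1})^r, the number p(α) of multisets of nonzero vectors in (ℤ_{≥0})^r summing to α satisfies p(α) ≥ (1/e) Σ_{k=0}^∞ (1/(k+1)!) ∏_{i=1}^r C(k+α_i, k). -/

import Mathlib

open Finset

namespace VPaux

variable {r : ℕ}

/-- The multiset of values of a tuple. -/
def M {l : ℕ} (f : Fin l → (Fin r → ℕ)) : Multiset (Fin r → ℕ) :=
  Multiset.map f Finset.univ.val

lemma mem_M {l : ℕ} {f : Fin l → (Fin r → ℕ)} {x : Fin r → ℕ} :
    x ∈ M f ↔ ∃ j, f j = x := by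
  simp [M, List.mem_ofFn]

lemma M_sum {l : ℕ} (f : Fin l → (Fin r → ℕ)) : (M f).sum = ∑ j, f j := by
  rfl

lemma M_succAbove {n : ℕ} (f : Fin (n + 1) → (Fin r → ℕ)) (j : Fin (n + 1)) :
    M f = f j ::ₘ M (j.removeNth f) := by
  unfold M
  rw [Fin.univ_succAbove n j, Finset.cons_val, Multiset.map_cons, Finset.map_val,
    Multiset.map_map]
  rfl

/-- The fiber: tuples whose multiset of nonzero values is `s`. -/
def fib (s : Multiset (Fin r → ℕ)) (l : ℕ) : Set (Fin l → (Fin r → ℕ)) :=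
  {f | (M f).filter (fun β => β ≠ 0) = s}

lemma fib_finite (s : Multiset (Fin r → ℕ)) (l : ℕ) : (fib s l).Finite := by
  classical
  apply Set.Finite.subset
    (Set.Finite.pi (fun _ : Fin l => (s.toFinset.finite_toSet.insert (0 : Fin r → ℕ))))
  intro f hf
  simp only [Set.mem_pi, Set.mem_univ, forall_true_left, Set.mem_insert_iff]
  intro j
  by_cases h : f j = 0
  · exact Or.inl h
  · right
    have : f j ∈ (M f).filter (fun β => β ≠ 0) :=
      Multiset.mem_filter.mpr ⟨mem_M.mpr ⟨j, rfl⟩, h⟩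
    rw [hf] at this
    simpa using this

lemma fib_ncard (s : Multiset (Fin r → ℕ)) :
    ∀ l, (fib s l).ncard ≤ l.descFactorial (Multiset.card s) := by
  induction s using Multiset.induction_on with
  | empty =>
    intro l
    have hsub : fib (0 : Multiset (Fin r → ℕ)) l ⊆ {(fun _ => 0 : Fin l → (Fin r → ℕ))} := by
      intro f hf
      have hf' : (M f).filter (fun β => β ≠ 0) = 0 := hf
      have : ∀ j, f j = 0 := by
        intro j
        by_contra h
        have : f j ∈ (M f).filter (fun β => β ≠ 0) :=
          Multiset.mem_filter.mpr ⟨mem_M.mpr ⟨j, rfl⟩, h⟩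
        rw [hf'] at this
        simp at this
      simp only [Set.mem_singleton_iff]
      funext j; exact this j
    calc (fib (0 : Multiset (Fin r → ℕ)) l).ncard
        ≤ ({(fun _ => 0 : Fin l → (Fin r → ℕ))} : Set _).ncard :=
          Set.ncard_le_ncard hsub (Set.finite_singleton _)
      _ = 1 := Set.ncard_singleton _
      _ = l.descFactorial (Multiset.card (0 : Multiset (Fin r → ℕ))) := by simp
  | cons a s ih =>
    intro l
    by_cases ha : a = 0
    · have : fib (a ::ₘ s) l = ∅ := by
        ext f
        simp only [Set.mem_empty_iff_false, iff_false]
        intro hf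
        have : a ∈ (M f).filter (fun β => β ≠ 0) := by
          rw [hf]; exact Multiset.mem_cons_self a s
        have := (Multiset.mem_filter.mp this).2
        exact this ha
      rw [this]
      simp
    · match l with
      | 0 =>
        have : fib (a ::ₘ s) 0 = ∅ := by
          ext f
          simp only [Set.mem_empty_iff_false, iff_false]
          intro hf
          have hM : M f = 0 := by
            simp [M]
          rw [fib, Set.mem_setOf_eq, hM] at hf
          simp at hf
        rw [this]
        simp
      | n + 1 =>
        haveI : Finite ↥(fib s n) := (fib_finite s n).to_subtype
        have key : ∀ f : ↥(fib (a ::ₘ s) (n + 1)), ∃ j : Fin (n + 1), f.1 j = a := by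
          rintro ⟨f, hf⟩
          have : a ∈ (M f).filter (fun β => β ≠ 0) := by
            rw [hf]; exact Multiset.mem_cons_self a s
          exact mem_M.mp (Multiset.mem_filter.mp this).1
        choose J hJ using key
        have hfib : ∀ f : ↥(fib (a ::ₘ s) (n + 1)), (J f).removeNth f.1 ∈ fib s n := by
          rintro f
          obtain ⟨f, hf⟩ := f
          have hdec := M_succAbove f (J ⟨f, hf⟩)
          rw [show f (J ⟨f, hf⟩) = a from hJ ⟨f, hf⟩] at hdec
          have : (M f).filter (fun β => β ≠ 0)
              = a ::ₘ (M ((J ⟨f, hf⟩).removeNth f)).filter (fun β => β ≠ 0) := by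
            rw [hdec, Multiset.filter_cons_of_pos (p := fun β => β ≠ 0) _ ha]
          rw [hf] at this
          exact ((Multiset.cons_inj_right a).mp this.symm)
        set Φ : ↥(fib (a ::ₘ s) (n + 1)) → Fin (n + 1) × ↥(fib s n) :=
          fun f => ⟨J f, ⟨(J f).removeNth f.1, hfib f⟩⟩ with hΦ
        have hinj : Function.Injective Φ := by
          rintro ⟨f₁, h₁⟩ ⟨f₂, h₂⟩ h
          simp only [hΦ, Prod.mk.injEq, Subtype.mk.injEq] at h
          obtain ⟨hj, hrm⟩ := h
          have e₁ : f₁ = Fin.insertNth (J ⟨f₁, h₁⟩) (f₁ (J ⟨f₁, h₁⟩)) ((J ⟨f₁, h₁⟩).removeNth f₁) :=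
            (Fin.insertNth_self_removeNth _ _).symm
          have e₂ : f₂ = Fin.insertNth (J ⟨f₂, h₂⟩) (f₂ (J ⟨f₂, h₂⟩)) ((J ⟨f₂, h₂⟩).removeNth f₂) :=
            (Fin.insertNth_self_removeNth _ _).symm
          apply Subtype.ext
          show f₁ = f₂
          conv_lhs => rw [e₁]
          conv_rhs => rw [e₂]
          rw [show f₁ (J ⟨f₁, h₁⟩) = a from hJ ⟨f₁, h₁⟩,
            show f₂ (J ⟨f₂, h₂⟩) = a from hJ ⟨f₂, h₂⟩, hrm, hj]
        calc (fib (a ::ₘ s) (n + 1)).ncard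
            = Nat.card ↥(fib (a ::ₘ s) (n + 1)) := (Nat.card_coe_set_eq _).symm
          _ ≤ Nat.card (Fin (n + 1) × ↥(fib s n)) := Nat.card_le_card_of_injective Φ hinj
          _ = (n + 1) * (fib s n).ncard := by
              rw [Nat.card_prod, Nat.card_eq_fintype_card, Fintype.card_fin,
                Nat.card_coe_set_eq]
          _ ≤ (n + 1) * n.descFactorial (Multiset.card s) :=
              Nat.mul_le_mul_left _ (ih n)
          _ = (n + 1).descFactorial (Multiset.card (a ::ₘ s)) := by
              rw [Multiset.card_cons, Nat.succ_descFactorial_succ]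

/-- Stars and bars for tuples of naturals. -/
lemma card_sumFiber (l n : ℕ) :
    Nat.card {g : Fin l → ℕ // ∑ j, g j = n} = (l + n - 1).choose n := by
  classical
  have hcount : ∀ (m : Multiset (Fin l)) (j : Fin l),
      (Multiset.equivDFinsupp.toEquiv.trans DFinsupp.equivFunOnFintype) m j = m.count j := by
    intro m j
    simp [Multiset.equivDFinsupp, DFinsupp.equivFunOnFintype, Multiset.toDFinsupp_apply]
  have e1 : Sym (Fin l) n ≃ {g : Fin l → ℕ // ∑ j, g j = n} := by
    refine Equiv.subtypeEquiv (Multiset.equivDFinsupp.toEquiv.trans DFinsupp.equivFunOnFintype) ?_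
    intro m
    have hsum : (∑ j, (Multiset.equivDFinsupp.toEquiv.trans DFinsupp.equivFunOnFintype) m j)
        = Multiset.card m := by
      rw [Finset.sum_congr rfl fun j _ => hcount m j]
      exact Multiset.sum_count_eq_card (fun a _ => Finset.mem_univ a)
    rw [hsum]
  rw [← Nat.card_congr e1, Nat.card_eq_fintype_card, Sym.card_sym_eq_choose, Fintype.card_fin]

variable (α : Fin r → ℕ)

lemma card_T (l : ℕ) :
    Nat.card {f : Fin l → (Fin r → ℕ) // ∑ j, f j = α}
      = ∏ i, (l + α i - 1).choose (α i) := by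
  have e : {f : Fin l → (Fin r → ℕ) // ∑ j, f j = α}
      ≃ ∀ i, {g : Fin l → ℕ // ∑ j, g j = α i} :=
    { toFun := fun f i => ⟨fun j => f.1 j i, by
        have := congrFun f.2 i
        rw [Finset.sum_apply] at this
        exact this⟩
      invFun := fun h => ⟨fun j i => (h i).1 j, by
        funext i
        rw [Finset.sum_apply]
        exact (h i).2⟩
      left_inv := fun _ => rfl
      right_inv := fun _ => rfl }
  rw [Nat.card_congr e, Nat.card_pi]
  exact Finset.prod_congr rfl fun i _ => card_sumFiber l (α i)

lemma T_finite (l : ℕ) : ({f : Fin l → (Fin r → ℕ) | ∑ j, f j = α}).Finite := by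
  apply Set.Finite.subset
    (Set.Finite.pi (fun _ : Fin l => Set.Finite.pi (fun i : Fin r => Set.finite_Iic (α i))))
  intro f hf
  simp only [Set.mem_setOf_eq] at hf
  simp only [Set.mem_pi, Set.mem_univ, forall_true_left, Set.mem_Iic]
  intro j i
  calc f j i ≤ ∑ j', f j' i :=
        Finset.single_le_sum (f := fun j' => f j' i) (fun _ _ => Nat.zero_le _) (mem_univ j)
    _ = α i := by rw [← Finset.sum_apply]; exact congrFun hf i

/-- The partition set. -/
def Sset : Set (Multiset (Fin r → ℕ)) := {s | (∀ β ∈ s, β ≠ 0) ∧ s.sum = α}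

lemma sum_coord (s : Multiset (Fin r → ℕ)) :
    (s.map fun β => ∑ i, β i).sum = ∑ i, s.sum i := by
  induction s using Multiset.induction_on with
  | empty => simp
  | cons a s ih => simp [ih, Finset.sum_add_distrib]

lemma card_le_of_mem {s : Multiset (Fin r → ℕ)} (hs : s ∈ Sset α) :
    Multiset.card s ≤ ∑ i, α i := by
  obtain ⟨hs1, hs2⟩ := hs
  have h1 : ∀ β ∈ s, (fun _ : Fin r → ℕ => 1) β ≤ (fun β : Fin r → ℕ => ∑ i, β i) β := by
    intro β hβ
    obtain ⟨i, hi⟩ := Function.ne_iff.mp (hs1 β hβ)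
    calc (1:ℕ) ≤ β i := Nat.one_le_iff_ne_zero.mpr hi
      _ ≤ ∑ i, β i := Finset.single_le_sum (fun _ _ => Nat.zero_le _) (mem_univ i)
  calc Multiset.card s = (s.map fun _ => 1).sum := by simp
    _ ≤ (s.map fun β => ∑ i, β i).sum := Multiset.sum_map_le_sum_map _ _ h1
    _ = ∑ i, s.sum i := sum_coord s
    _ = ∑ i, α i := by rw [hs2]

lemma Sset_finite : (Sset α).Finite := by
  classical
  set B : Finset (Fin r → ℕ) := Fintype.piFinset (fun i => Finset.range (α i + 1)) with hB
  set MM : Multiset (Fin r → ℕ) := (∑ i, α i) • B.val with hMM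
  apply Set.Finite.subset (Multiset.finite_toSet MM.powerset)
  intro s hs
  obtain ⟨hs1, hs2⟩ := hs
  show s ∈ {x | x ∈ MM.powerset}
  rw [Set.mem_setOf_eq]
  rw [Multiset.mem_powerset]
  rw [Multiset.le_iff_count]
  intro x
  by_cases hx : x ∈ s
  · have hxB : x ∈ B := by
      rw [hB]
      rw [Fintype.mem_piFinset]
      intro i
      rw [Finset.mem_range]
      have h1 : x ≤ s.sum := Multiset.single_le_sum (fun y _ => zero_le (a := y)) _ hx
      have h2 : x i ≤ α i := by
        have h3 := h1 i
        rwa [hs2] at h3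
      omega
    have h1 : Multiset.count x MM = ∑ i, α i := by
      rw [hMM, Multiset.count_nsmul, Multiset.count_eq_one_of_mem B.nodup hxB, mul_one]
    rw [h1]
    calc Multiset.count x s ≤ Multiset.card s := Multiset.count_le_card x s
      _ ≤ ∑ i, α i := card_le_of_mem α ⟨hs1, hs2⟩
  · rw [Multiset.count_eq_zero_of_notMem hx]
    exact Nat.zero_le _

/-- The key finite counting inequality. -/
lemma count_ineq (k : ℕ) :
    ∏ i, (k + α i).choose k
      ≤ ∑ s ∈ (Sset_finite α).toFinset, (k + 1).descFactorial (Multiset.card s) := by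
  classical
  have h1 : ∏ i, (k + α i).choose k
      = Nat.card {f : Fin (k + 1) → (Fin r → ℕ) // ∑ j, f j = α} := by
    rw [card_T]
    apply Finset.prod_congr rfl
    intro i _
    have h : k + 1 + α i - 1 = k + α i := by omega
    rw [h]
    exact Nat.choose_symm_add
  have h2 : Nat.card {f : Fin (k + 1) → (Fin r → ℕ) // ∑ j, f j = α}
      = ((T_finite α (k + 1)).toFinset).card := by
    rw [← Set.ncard_eq_toFinset_card _ (T_finite α (k + 1))]
    exact Nat.card_coe_set_eq _
  have h3 : (T_finite α (k + 1)).toFinset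
      ⊆ (Sset_finite α).toFinset.biUnion (fun s => (fib_finite s (k + 1)).toFinset) := by
    intro f hf
    rw [Set.Finite.mem_toFinset] at hf
    have hf' : ∑ j, f j = α := hf
    set s₀ : Multiset (Fin r → ℕ) := (M f).filter (fun β => β ≠ 0) with hs₀
    have hs₀S : s₀ ∈ Sset α := by
      constructor
      · intro β hβ
        exact (Multiset.mem_filter.mp hβ).2
      · have hsplit := Multiset.filter_add_not (fun β => β ≠ 0) (M f)
        have hz : ((M f).filter (fun β => ¬ β ≠ 0)).sum = 0 := by
          apply Multiset.sum_eq_zero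
          intro x hx
          have := (Multiset.mem_filter.mp hx).2
          simpa using this
        have : s₀.sum + ((M f).filter (fun β => ¬ β ≠ 0)).sum = (M f).sum := by
          rw [← Multiset.sum_add, hsplit]
        rw [hz, add_zero, M_sum, hf'] at this
        exact this
    rw [Finset.mem_biUnion]
    refine ⟨s₀, (Set.Finite.mem_toFinset _).mpr hs₀S, (Set.Finite.mem_toFinset _).mpr ?_⟩
    exact hs₀.symm ▸ rfl
  calc ∏ i, (k + α i).choose k
      = ((T_finite α (k + 1)).toFinset).card := by rw [h1, h2]
    _ ≤ ((Sset_finite α).toFinset.biUnion (fun s => (fib_finite s (k + 1)).toFinset)).card :=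
        Finset.card_le_card h3
    _ ≤ ∑ s ∈ (Sset_finite α).toFinset, ((fib_finite s (k + 1)).toFinset).card :=
        Finset.card_biUnion_le
    _ ≤ ∑ s ∈ (Sset_finite α).toFinset, (k + 1).descFactorial (Multiset.card s) := by
        apply Finset.sum_le_sum
        intro s _
        rw [← Set.ncard_eq_toFinset_card _ (fib_finite s (k + 1))]
        exact fib_ncard s (k + 1)

/-- The single-multiset exponential bound. -/
lemma desc_sum_le (m : ℕ) (hm : 1 ≤ m) (n : ℕ) :
    ∑ k ∈ Finset.range n, ((k + 1).descFactorial m : ℝ) / ((k + 1).factorial : ℝ)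
      ≤ Real.exp 1 := by
  have hterm : ∀ k, ((k + 1).descFactorial m : ℝ) / ((k + 1).factorial : ℝ)
      = if m ≤ k + 1 then 1 / ((k + 1 - m).factorial : ℝ) else 0 := by
    intro k
    split_ifs with h
    · have hfac := Nat.factorial_mul_descFactorial h
      have h1 : ((k + 1 - m).factorial : ℝ) * ((k + 1).descFactorial m : ℝ)
          = ((k + 1).factorial : ℝ) := by
        rw [← Nat.cast_mul, hfac]
      have h2 : ((k + 1).factorial : ℝ) ≠ 0 := by positivity
      have h3 : ((k + 1 - m).factorial : ℝ) ≠ 0 := by positivity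
      field_simp
      linarith [h1]
    · push_neg at h
      rw [Nat.descFactorial_eq_zero_iff_lt.mpr h]
      simp
  calc ∑ k ∈ Finset.range n, ((k + 1).descFactorial m : ℝ) / ((k + 1).factorial : ℝ)
      = ∑ k ∈ (Finset.range n).filter (fun k => m ≤ k + 1),
          1 / ((k + 1 - m).factorial : ℝ) := by
        rw [Finset.sum_filter]
        apply Finset.sum_congr rfl
        intro k _
        rw [hterm k]
    _ = ∑ j ∈ ((Finset.range n).filter (fun k => m ≤ k + 1)).image (fun k => k + 1 - m),
          1 / ((j).factorial : ℝ) := by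
        rw [Finset.sum_image]
        intro x hx y hy hxy
        simp only [Finset.coe_filter, Finset.mem_filter, Set.mem_setOf_eq] at hx hy hxy
        omega
    _ ≤ ∑ j ∈ Finset.range n, 1 / ((j).factorial : ℝ) := by
        apply Finset.sum_le_sum_of_subset_of_nonneg
        · intro j hj
          simp only [Finset.mem_image, Finset.mem_filter, Finset.mem_range] at hj ⊢
          obtain ⟨k, ⟨hk, hmk⟩, rfl⟩ := hj
          omega
        · intro j _ _
          positivity
    _ ≤ Real.exp 1 := by
        have h := Real.sum_le_exp_of_nonneg (by norm_num : (0:ℝ) ≤ 1) n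
        simpa [one_pow] using h

end VPaux

/-- The number of multisets of nonzero vectors in `(ℤ≥0)^r` summing componentwise to `α`. -/
noncomputable def vecPartitions {r : ℕ} (α : Fin r → ℕ) : ℕ :=
  Set.ncard {s : Multiset (Fin r → ℕ) | (∀ β ∈ s, β ≠ 0) ∧ s.sum = α}

theorem vecPartitions_lower_bound (r : ℕ) (hr : 1 ≤ r) (α : Fin r → ℕ)
    (hα : ∀ i, 1 ≤ α i) :
    (1 / Real.exp 1) *
        ∑' k : ℕ, (1 / ((k + 1).factorial : ℝ)) * ∏ i, ((k + α i).choose k : ℝ)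
      ≤ (vecPartitions α : ℝ) := by
  classical
  set SF := (VPaux.Sset_finite α).toFinset with hSF
  have hP : vecPartitions α = SF.card := by
    rw [vecPartitions]
    exact Set.ncard_eq_toFinset_card _ (VPaux.Sset_finite α)
  set a : ℕ → ℝ := fun k => (1 / ((k + 1).factorial : ℝ)) * ∏ i, ((k + α i).choose k : ℝ)
    with ha
  have hanonneg : ∀ k, 0 ≤ a k := by
    intro k
    apply mul_nonneg (by positivity)
    exact Finset.prod_nonneg fun i _ => by positivity
  have hm : ∀ s ∈ SF, 1 ≤ Multiset.card s := by
    intro s hs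
    rw [hSF, Set.Finite.mem_toFinset] at hs
    have hs0 : s ≠ 0 := by
      intro h
      have h2 := hs.2
      rw [h, Multiset.sum_zero] at h2
      have := congrFun h2 ⟨0, hr⟩
      have hα0 := hα ⟨0, hr⟩
      simp only [Pi.zero_apply] at this
      omega
    exact Multiset.card_pos.mpr hs0
  have hpartial : ∀ n, ∑ k ∈ Finset.range n, a k ≤ Real.exp 1 * SF.card := by
    intro n
    have step1 : ∀ k, a k ≤
        ∑ s ∈ SF, ((k + 1).descFactorial (Multiset.card s) : ℝ) / ((k + 1).factorial : ℝ) := by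
      intro k
      have hc := VPaux.count_ineq α k
      have hc' : ((∏ i, (k + α i).choose k : ℕ) : ℝ)
          ≤ ((∑ s ∈ SF, (k + 1).descFactorial (Multiset.card s) : ℕ) : ℝ) := by
        exact_mod_cast hc
      rw [Nat.cast_prod, Nat.cast_sum] at hc'
      have hfac : (0:ℝ) < ((k + 1).factorial : ℝ) := by positivity
      rw [ha]
      simp only []
      rw [one_div, inv_mul_eq_div, div_le_iff₀ hfac]
      calc ∏ i, ((k + α i).choose k : ℝ)
          ≤ ∑ s ∈ SF, ((k + 1).descFactorial (Multiset.card s) : ℝ) := hc'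
        _ = (∑ s ∈ SF, ((k + 1).descFactorial (Multiset.card s) : ℝ) / ((k + 1).factorial : ℝ))
              * ((k + 1).factorial : ℝ) := by
            rw [← Finset.sum_div, div_mul_cancel₀]
            exact ne_of_gt hfac
    calc ∑ k ∈ Finset.range n, a k
        ≤ ∑ k ∈ Finset.range n, ∑ s ∈ SF,
            ((k + 1).descFactorial (Multiset.card s) : ℝ) / ((k + 1).factorial : ℝ) :=
          Finset.sum_le_sum fun k _ => step1 k
      _ = ∑ s ∈ SF, ∑ k ∈ Finset.range n,
            ((k + 1).descFactorial (Multiset.card s) : ℝ) / ((k + 1).factorial : ℝ) :=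
          Finset.sum_comm
      _ ≤ ∑ s ∈ SF, Real.exp 1 :=
          Finset.sum_le_sum fun s hs => VPaux.desc_sum_le (Multiset.card s) (hm s hs) n
      _ = Real.exp 1 * SF.card := by
          rw [Finset.sum_const, nsmul_eq_mul, mul_comm]
  have hsummable : Summable a := summable_of_sum_range_le hanonneg hpartial
  have htsum : ∑' k, a k ≤ Real.exp 1 * SF.card :=
    Real.tsum_le_of_sum_range_le hanonneg hpartial
  have he : (0:ℝ) < Real.exp 1 := Real.exp_pos 1
  rw [hP]
  calc (1 / Real.exp 1) * ∑' k, a k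
      ≤ (1 / Real.exp 1) * (Real.exp 1 * SF.card) :=
        mul_le_mul_of_nonneg_left htsum (by positivity)
    _ = (SF.card : ℝ) := by field_simp
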